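/- Let M be a symmetric n×n real matrix with −ΛI ≤ M ≤ ΛI for some Λ ≥ 0, and let δ = (π/2 − arctan Λ)/2. Then cos(δ)I + sin(δ)M ≥ (1/L₂)I and cos(δ)I + sin(δ)M ≤ L₁I, where L₁ = cos δ + Λ sin δ and 1/L₂ = cos δ (tan δ + Λ)/tan(π/2 − δ) > 0. -/

import Mathlib

lemma psd_smul {n : ℕ} {A : Matrix (Fin n) (Fin n) ℝ} (hA : A.PosSemidef)
    {c : ℝ} (hc : 0 ≤ c) : (c • A).PosSemidef := by
  refine ⟨?_, fun x => ?_⟩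
  · unfold Matrix.IsHermitian
    rw [Matrix.conjTranspose_smul, hA.1.eq]
    simp
  · have := hA.2 x
    convert mul_nonneg hc this using 1
    simp only [Finsupp.sum, Finset.mul_sum, Matrix.smul_apply, smul_eq_mul]
    exact Finset.sum_congr rfl fun i _ => Finset.sum_congr rfl fun j _ => by ring

theorem stmt5 (n : ℕ) (M : Matrix (Fin n) (Fin n) ℝ) (hM : M.IsSymm)
    (Λ : ℝ) (hΛ : 0 ≤ Λ)
    (hlow : (M - (-Λ) • (1 : Matrix (Fin n) (Fin n) ℝ)).PosSemidef)
    (hup : (Λ • (1 : Matrix (Fin n) (Fin n) ℝ) - M).PosSemidef)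
    (δ : ℝ) (hδ : δ = (Real.pi / 2 - Real.arctan Λ) / 2)
    (L₁ invL₂ : ℝ) (hL₁ : L₁ = Real.cos δ + Λ * Real.sin δ)
    (hinvL₂ : invL₂ = Real.cos δ * (Real.tan δ + Λ) / Real.tan (Real.pi / 2 - δ)) :
    (Real.cos δ • (1 : Matrix (Fin n) (Fin n) ℝ) + Real.sin δ • M
        - invL₂ • 1).PosSemidef ∧
    (L₁ • (1 : Matrix (Fin n) (Fin n) ℝ)
        - (Real.cos δ • 1 + Real.sin δ • M)).PosSemidef ∧
    0 < invL₂ := by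
  have harc : Real.arctan Λ < Real.pi / 2 := Real.arctan_lt_pi_div_two Λ
  have harc0 : 0 ≤ Real.arctan Λ := by simpa using Real.arctan_strictMono.monotone hΛ
  have hδpos : 0 < δ := by rw [hδ]; linarith
  have hδlt : δ ≤ Real.pi / 4 := by rw [hδ]; linarith
  have hcos : 0 < Real.cos δ := Real.cos_pos_of_mem_Ioo
    ⟨by linarith [Real.pi_pos], by linarith [Real.pi_pos]⟩
  have hsin : 0 < Real.sin δ := Real.sin_pos_of_pos_of_lt_pi hδpos
    (by linarith [Real.pi_pos])
  have htan : 0 < Real.tan δ := by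
    rw [Real.tan_eq_sin_div_cos]; positivity
  -- key trig identity: cos 2δ = Λ sin 2δ
  have h2δ : 2 * δ = Real.pi / 2 - Real.arctan Λ := by rw [hδ]; ring
  have hkey : Real.cos (2 * δ) = Λ * Real.sin (2 * δ) := by
    rw [h2δ, Real.cos_pi_div_two_sub, Real.sin_pi_div_two_sub,
      Real.sin_arctan, Real.cos_arctan]
    ring
  rw [Real.cos_two_mul', Real.sin_two_mul] at hkey
  -- invL₂ = cos δ - Λ sin δ
  have hinv : invL₂ = Real.cos δ - Λ * Real.sin δ := by
    rw [hinvL₂, Real.tan_pi_div_two_sub, Real.tan_eq_sin_div_cos]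
    field_simp
    nlinarith [hkey]
  have hinvpos : 0 < invL₂ := by
    rw [hinv]
    nlinarith [hkey, Real.sin_sq_add_cos_sq δ]
  refine ⟨?_, ?_, hinvpos⟩
  · have h1 : Real.cos δ • (1 : Matrix (Fin n) (Fin n) ℝ) + Real.sin δ • M
        - invL₂ • 1 = Real.sin δ • (M - (-Λ) • (1 : Matrix (Fin n) (Fin n) ℝ)) := by
      rw [hinv]
      ext i j
      simp [Matrix.smul_apply, Matrix.one_apply, Matrix.sub_apply, Matrix.add_apply]
      split <;> ring
    rw [h1]
    exact psd_smul hlow hsin.le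
  · have h2 : L₁ • (1 : Matrix (Fin n) (Fin n) ℝ)
        - (Real.cos δ • 1 + Real.sin δ • M)
        = Real.sin δ • (Λ • (1 : Matrix (Fin n) (Fin n) ℝ) - M) := by
      rw [hL₁]
      ext i j
      simp [Matrix.smul_apply, Matrix.one_apply, Matrix.sub_apply, Matrix.add_apply]
      split <;> ring
    rw [h2]
    exact psd_smul hup hsin.le
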